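/- Fix $r < 0$ and define $F_r(v; x, y) = \big(\frac{(x-v)^2+y^2}{x^2+y^2}\big)^r - 1 + \frac{2rvx}{x^2+y^2}$ for $v, x \in \mathbb{R}$, $y > 0$. Then $F_r(0)=0$, $\partial_v F_r(0)=0$, and the second derivative satisfies $\partial_v^2 F_r(v) \le \frac{4r(r-1)}{x^2+y^2}\big(\frac{x^2+y^2}{(x-v)^2+y^2}\big)^{1-r}$ for all $v \in \mathbb{R}$. -/

import Mathlib

/-- For fixed `r < 0`, the function
`F_r(v) = (((x-v)²+y²)/(x²+y²))^r - 1 + 2rvx/(x²+y²)` satisfies `F_r(0) = 0`,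
`F_r'(0) = 0`, and `F_r''(v) ≤ 4r(r-1)/(x²+y²) · ((x²+y²)/((x-v)²+y²))^{1-r}`. -/
theorem F_r_derivatives (r x y : ℝ) (hr : r < 0) (hy : 0 < y) :
    let F : ℝ → ℝ := fun v =>
      (((x - v) ^ 2 + y ^ 2) / (x ^ 2 + y ^ 2)) ^ r - 1 + 2 * r * v * x / (x ^ 2 + y ^ 2)
    F 0 = 0 ∧ deriv F 0 = 0 ∧
    ∀ v : ℝ, deriv (deriv F) v
      ≤ 4 * r * (r - 1) / (x ^ 2 + y ^ 2)
          * ((x ^ 2 + y ^ 2) / ((x - v) ^ 2 + y ^ 2)) ^ (1 - r) := by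
  intro F
  set A : ℝ := x ^ 2 + y ^ 2 with hAdef
  have hA : 0 < A := by positivity
  have hBpos : ∀ v : ℝ, (0:ℝ) < (x - v) ^ 2 + y ^ 2 := fun v => by positivity
  have hpos : ∀ v : ℝ, ((x - v) ^ 2 + y ^ 2) / A ≠ 0 :=
    fun v => ne_of_gt (div_pos (hBpos v) hA)
  -- derivative of the inner function
  have hg : ∀ v : ℝ, HasDerivAt (fun v => ((x - v) ^ 2 + y ^ 2) / A) (2 * (v - x) / A) v := by
    intro v
    have h1 : HasDerivAt (fun v : ℝ => (x - v) ^ 2 + y ^ 2) (2 * (v - x)) v := by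
      have := (((hasDerivAt_const v x).sub (hasDerivAt_id v)).pow 2).add_const (y ^ 2)
      refine this.congr_deriv ?_
      simp
      ring
    exact h1.div_const A
  -- first derivative of F
  have hF' : ∀ v : ℝ, HasDerivAt F
      (r * (((x - v) ^ 2 + y ^ 2) / A) ^ (r - 1) * (2 * (v - x) / A) + 2 * r * x / A) v := by
    intro v
    have h2 := (hg v).rpow_const (p := r) (Or.inl (hpos v))
    have h3 : HasDerivAt (fun v : ℝ => 2 * r * v * x / A) (2 * r * x / A) v := by
      have hfun : (fun v : ℝ => 2 * r * v * x / A) = fun v : ℝ => (2 * r * x / A) * v := by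
        funext v; ring
      rw [hfun]
      simpa using (hasDerivAt_id v).const_mul (2 * r * x / A)
    have := (h2.sub_const 1).add h3
    refine this.congr_deriv ?_
    ring
  refine ⟨?_, ?_, ?_⟩
  · show (((x - 0) ^ 2 + y ^ 2) / A) ^ r - 1 + 2 * r * 0 * x / A = 0
    rw [show ((x - 0) ^ 2 + y ^ 2) = A by rw [hAdef]; ring, div_self hA.ne']
    simp [Real.one_rpow]
  · rw [(hF' 0).deriv]
    rw [show ((x - 0) ^ 2 + y ^ 2) = A by rw [hAdef]; ring, div_self hA.ne']
    simp [Real.one_rpow]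
    ring
  · intro v
    set G : ℝ → ℝ := fun v =>
      r * (((x - v) ^ 2 + y ^ 2) / A) ^ (r - 1) * (2 * (v - x) / A) + 2 * r * x / A with hGdef
    have hderivF : deriv F = G := funext fun v => (hF' v).deriv
    -- second derivative
    have h5 : HasDerivAt (fun v : ℝ => 2 * (v - x) / A) (2 / A) v := by
      have := (((hasDerivAt_id v).sub_const x).const_mul 2).div_const A
      refine this.congr_deriv ?_
      ring
    have h4 := ((hg v).rpow_const (p := r - 1) (Or.inl (hpos v))).const_mul r
    have h6 := (h4.mul h5).add_const (2 * r * x / A)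
    have hG : HasDerivAt G
        (r * (2 * (v - x) / A * (r - 1) * (((x - v) ^ 2 + y ^ 2) / A) ^ (r - 1 - 1))
            * (2 * (v - x) / A)
          + r * (((x - v) ^ 2 + y ^ 2) / A) ^ (r - 1) * (2 / A)) v := by
      exact h6
    rw [hderivF, hG.deriv]
    set b : ℝ := (x - v) ^ 2 + y ^ 2 with hbdef
    have hb : 0 < b := hBpos v
    have h7 : (A / b) ^ (1 - r) = (b / A) ^ (r - 1) := by
      rw [show (1 - r) = -(r - 1) by ring, Real.rpow_neg (by positivity),
        ← Real.inv_rpow (by positivity), inv_div]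
    have h8 : (b / A) ^ (r - 1 - 1) = (b / A) ^ (r - 1) * (A / b) := by
      rw [show r - 1 - 1 = (r - 1) + (-1) by ring, Real.rpow_add (div_pos hb hA),
        Real.rpow_neg_one, inv_div]
    rw [h7, h8]
    set p : ℝ := (b / A) ^ (r - 1) with hpdef
    have hp : 0 < p := Real.rpow_pos_of_pos (div_pos hb hA) _
    have hrr : 0 < r * (r - 1) := mul_pos_of_neg_of_neg hr (by linarith)
    have hs : (v - x) ^ 2 ≤ b := by rw [hbdef]; nlinarith [sq_nonneg y]
    have hLHS : r * (2 * (v - x) / A * (r - 1) * (p * (A / b))) * (2 * (v - x) / A)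
        + r * p * (2 / A)
        = 4 * r * (r - 1) * p * (v - x) ^ 2 / (A * b) + 2 * r * p / A := by
      field_simp
      ring
    rw [hLHS]
    have h1 : 4 * r * (r - 1) * p * (v - x) ^ 2 / (A * b) ≤ 4 * r * (r - 1) * p / A := by
      rw [div_le_div_iff₀ (by positivity) hA]
      have hc : 0 ≤ 4 * r * (r - 1) * p := by nlinarith [mul_pos hrr hp]
      nlinarith [mul_le_mul_of_nonneg_right (mul_le_mul_of_nonneg_left hs hc) hA.le]
    have h2 : 2 * r * p / A ≤ 0 := by
      apply div_nonpos_of_nonpos_of_nonneg _ hA.le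
      nlinarith
    have : 4 * r * (r - 1) / A * p = 4 * r * (r - 1) * p / A := by ring
    rw [this]
    linarith
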